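/- Let A_0, A_1, A_2, … be positive integers satisfying A_{n+1} > A_n for all n ≥ 0. Then the sum α = Σ_{n=0}^∞ (−1)^n / (A_0 A_1 ⋯ A_n) is irrational. -/

import Mathlib

open Finset Filter

namespace Stmt6Aux

noncomputable def S (A : ℕ → ℕ) (k : ℕ) : ℝ :=
  ∑' n : ℕ, (-1 : ℝ) ^ n / ∏ j ∈ Finset.range (n + 1), (A (k + j) : ℝ)

variable {A : ℕ → ℕ}

theorem hk1 (hApos : ∀ n : ℕ, 0 < A n) (hA : ∀ n : ℕ, A n < A (n + 1)) :
    ∀ k : ℕ, k + 1 ≤ A k := by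
  intro k
  induction k with
  | zero => exact hApos 0
  | succ n ih => have := hA n; omega

theorem Ppos (hApos : ∀ n : ℕ, 0 < A n) (k n : ℕ) :
    0 < ∏ j ∈ Finset.range (n + 1), (A (k + j) : ℝ) := by
  apply Finset.prod_pos
  intro j _
  exact_mod_cast hApos (k + j)

theorem Pge (hApos : ∀ n : ℕ, 0 < A n) (hA : ∀ n : ℕ, A n < A (n + 1)) (k n : ℕ) :
    (2 : ℝ) ^ n ≤ ∏ j ∈ Finset.range (n + 1), (A (k + j) : ℝ) := by
  induction n with
  | zero =>
    rw [pow_zero, Finset.prod_range_one]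
    exact_mod_cast hApos (k + 0)
  | succ n ih =>
    have hstep := Finset.prod_range_succ (fun j => (A (k + j) : ℝ)) (n + 1)
    rw [pow_succ, hstep]
    have h2 : (2 : ℝ) ≤ (A (k + (n + 1)) : ℝ) := by
      have := hk1 hApos hA (k + (n + 1))
      exact_mod_cast le_trans (by omega) this
    exact mul_le_mul ih h2 (by norm_num) (Ppos hApos k n).le

theorem Pmono (hApos : ∀ n : ℕ, 0 < A n) (k : ℕ) :
    Monotone (fun n => ∏ j ∈ Finset.range (n + 1), (A (k + j) : ℝ)) := by
  apply monotone_nat_of_le_succ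
  intro n
  have hstep := Finset.prod_range_succ (fun j => (A (k + j) : ℝ)) (n + 1)
  rw [hstep]
  have h1 : (1 : ℝ) ≤ (A (k + (n + 1)) : ℝ) := by exact_mod_cast hApos (k + (n + 1))
  exact le_mul_of_one_le_right (Ppos hApos k n).le h1

theorem Ssummable (hApos : ∀ n : ℕ, 0 < A n) (hA : ∀ n : ℕ, A n < A (n + 1)) (k : ℕ) :
    Summable (fun n : ℕ => (-1 : ℝ) ^ n / ∏ j ∈ Finset.range (n + 1), (A (k + j) : ℝ)) := by
  apply Summable.of_norm_bounded summable_geometric_two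
  intro n
  rw [norm_div, norm_pow, norm_neg, norm_one, one_pow, Real.norm_eq_abs,
    abs_of_pos (Ppos hApos k n), div_pow, one_pow,
    div_le_div_iff₀ (Ppos hApos k n) (by positivity)]
  have := Pge hApos hA k n
  linarith

theorem Srec (hApos : ∀ n : ℕ, 0 < A n) (hA : ∀ n : ℕ, A n < A (n + 1)) (k : ℕ) :
    S A k = (1 - S A (k + 1)) / (A k : ℝ) := by
  have hAk : (0 : ℝ) < (A k : ℝ) := by exact_mod_cast hApos k
  rw [S, Summable.tsum_eq_zero_add (Ssummable hApos hA k)]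
  have h0 : (-1 : ℝ) ^ 0 / ∏ j ∈ Finset.range (0 + 1), (A (k + j) : ℝ) = 1 / (A k : ℝ) := by
    simp
  rw [h0]
  have hterm : ∀ n : ℕ,
      (-1 : ℝ) ^ (n + 1) / ∏ j ∈ Finset.range (n + 1 + 1), (A (k + j) : ℝ)
      = -(1 / (A k : ℝ)) * ((-1 : ℝ) ^ n / ∏ j ∈ Finset.range (n + 1), (A (k + 1 + j) : ℝ)) := by
    intro n
    have hp : ∏ j ∈ Finset.range (n + 1 + 1), (A (k + j) : ℝ)
        = (∏ j ∈ Finset.range (n + 1), (A (k + 1 + j) : ℝ)) * (A k : ℝ) := by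
      rw [Finset.prod_range_succ']
      simp only [Nat.add_zero]
      refine congrArg (fun t => t * (A k : ℝ)) ?_
      exact Finset.prod_congr rfl fun x _ => by rw [show k + (x + 1) = k + 1 + x by omega]
    rw [hp, pow_succ]
    have hQ : (∏ j ∈ Finset.range (n + 1), (A (k + 1 + j) : ℝ)) ≠ 0 :=
      (Ppos hApos (k + 1) n).ne'
    field_simp
    try ring
  rw [tsum_congr hterm, tsum_mul_left]
  rw [show (∑' n : ℕ, (-1 : ℝ) ^ n / ∏ j ∈ Finset.range (n + 1), (A (k + 1 + j) : ℝ)) = S A (k+1) from rfl]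
  have hAk' : (A k : ℝ) ≠ 0 := hAk.ne'
  field_simp
  try ring

theorem Snonneg (hApos : ∀ n : ℕ, 0 < A n) (hA : ∀ n : ℕ, A n < A (n + 1)) (k : ℕ) :
    0 ≤ S A k := by
  have hsum := Ssummable hApos hA k
  have htends : Tendsto (fun m => ∑ i ∈ Finset.range m,
      (-1 : ℝ) ^ i * (1 / ∏ j ∈ Finset.range (i + 1), (A (k + j) : ℝ))) atTop (nhds (S A k)) := by
    have := hsum.hasSum.tendsto_sum_nat
    convert this using 2 with m
    apply Finset.sum_congr rfl
    intro i _
    rw [mul_one_div]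
    rfl
  have hanti : Antitone (fun n => 1 / ∏ j ∈ Finset.range (n + 1), (A (k + j) : ℝ)) := by
    intro a b hab
    apply one_div_le_one_div_of_le (Ppos hApos k a) (Pmono hApos k hab)
  have := hanti.alternating_series_le_tendsto htends 0
  simpa using this

theorem Sle (hApos : ∀ n : ℕ, 0 < A n) (hA : ∀ n : ℕ, A n < A (n + 1)) (k : ℕ) :
    S A k ≤ 1 / (A k : ℝ) := by
  rw [Srec hApos hA k]
  have hAk : (0 : ℝ) < (A k : ℝ) := by exact_mod_cast hApos k
  have := Snonneg hApos hA (k + 1)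
  exact (div_le_div_iff_of_pos_right hAk).mpr (by linarith)

theorem Spos (hApos : ∀ n : ℕ, 0 < A n) (hA : ∀ n : ℕ, A n < A (n + 1)) (k : ℕ) :
    0 < S A k := by
  rw [Srec hApos hA k]
  have hAk : (0 : ℝ) < (A k : ℝ) := by exact_mod_cast hApos k
  have hAk1 : (2 : ℝ) ≤ (A (k + 1) : ℝ) := by
    have := hk1 hApos hA (k + 1); exact_mod_cast le_trans (by omega) this
  have h1 := Sle hApos hA (k + 1)
  have h2 : 1 / (A (k + 1) : ℝ) < 1 := by
    rw [div_lt_one (by linarith)]; linarith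
  apply div_pos (by linarith) hAk

theorem Slt (hApos : ∀ n : ℕ, 0 < A n) (hA : ∀ n : ℕ, A n < A (n + 1)) (k : ℕ) :
    S A k < 1 / (A k : ℝ) := by
  rw [Srec hApos hA k]
  have hAk : (0 : ℝ) < (A k : ℝ) := by exact_mod_cast hApos k
  have := Spos hApos hA (k + 1)
  exact (div_lt_div_iff_of_pos_right hAk).mpr (by linarith)

end Stmt6Aux

theorem stmt_6 (A : ℕ → ℕ) (hApos : ∀ n : ℕ, 0 < A n) (hA : ∀ n : ℕ, A n < A (n + 1)) :
    Irrational (∑' n : ℕ, (-1 : ℝ) ^ n / ∏ j ∈ Finset.range (n + 1), (A j : ℝ)) := by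
  have key : (∑' n : ℕ, (-1 : ℝ) ^ n / ∏ j ∈ Finset.range (n + 1), (A j : ℝ))
      = Stmt6Aux.S A 0 := by
    unfold Stmt6Aux.S
    exact tsum_congr fun n => by simp only [Nat.zero_add]
  rw [key]
  rintro ⟨r, hr⟩
  set q : ℕ := r.den with hqdef
  have hq : 0 < q := r.pos
  have hq0 : (q : ℝ) ≠ 0 := by positivity
  have hz : ∀ k : ℕ, ∃ z : ℤ, (z : ℝ) = (q : ℝ) * Stmt6Aux.S A k := by
    intro k
    induction k with
    | zero =>
      refine ⟨r.num, ?_⟩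
      rw [← hr, Rat.cast_def]
      field_simp
      rw [hqdef]
    | succ n ih =>
      obtain ⟨z, hzk⟩ := ih
      refine ⟨(q : ℤ) - (A n : ℤ) * z, ?_⟩
      have hrec := Stmt6Aux.Srec hApos hA n
      have hAn : (A n : ℝ) ≠ 0 := by
        have := hApos n; positivity
      have h1 : Stmt6Aux.S A (n + 1) = 1 - (A n : ℝ) * Stmt6Aux.S A n := by
        rw [hrec]; field_simp; ring
      rw [h1]
      push_cast
      linear_combination (-(A n : ℝ)) * hzk
  obtain ⟨z, hzq⟩ := hz q
  have hAq : (q : ℝ) < (A q : ℝ) := by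
    have := Stmt6Aux.hk1 hApos hA q; exact_mod_cast by omega
  have hAqpos : (0 : ℝ) < (A q : ℝ) := by exact_mod_cast hApos q
  have hpos := Stmt6Aux.Spos hApos hA q
  have hlt := Stmt6Aux.Slt hApos hA q
  have hz1 : (1 : ℝ) ≤ (z : ℝ) := by
    have : (0 : ℝ) < (z : ℝ) := by
      rw [hzq]; positivity
    exact_mod_cast (by exact_mod_cast this : (0 : ℤ) < z)
  have h2 : (q : ℝ) * Stmt6Aux.S A q < 1 := by
    have h3 : (q : ℝ) * Stmt6Aux.S A q < (q : ℝ) * (1 / (A q : ℝ)) := by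
      apply mul_lt_mul_of_pos_left hlt (by exact_mod_cast hq)
    have h4 : (q : ℝ) * (1 / (A q : ℝ)) < 1 := by
      rw [mul_one_div, div_lt_one hAqpos]; exact hAq
    linarith
  rw [hzq] at hz1
  linarith
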